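/- Let C = [[1,0],[1,1]] ∈ SL(2,ℂ) and let h ∈ SL(2,ℂ) be conjugate to C (i.e. h = B⁻¹ C B for some B ∈ SL(2,ℂ)). Then h C h = C h C if and only if h = C or there exists α ∈ ℂ with h = [[1 − α, −1],[α², 1 + α]]. (Each matrix D_α = [[1 − α, −1],[α², 1 + α]] is itself conjugate to C, namely D_α = A⁻¹ C A with A = [[α, 1],[−1, 0]].) -/
import Mathlib


/-- Let `C = [[1,0],[1,1]] ∈ SL(2,ℂ)` and let `h` be conjugate to `C` in
`SL(2,ℂ)`. Then `h C h = C h C` if and only if `h = C` or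
`h = D_α = [[1 − α, −1],[α², 1 + α]]` for some `α ∈ ℂ`; moreover each `D_α` is
itself conjugate to `C`, namely `D_α = A⁻¹ C A` with `A = [[α, 1],[−1, 0]]`. -/
theorem trefoil_solutions_with_g_eq_C (C h : Matrix (Fin 2) (Fin 2) ℂ)
    (hC : C = !![1, 0; 1, 1])
    (hconj : ∃ B : Matrix (Fin 2) (Fin 2) ℂ, B.det = 1 ∧ h = B⁻¹ * C * B) :
    (h * C * h = C * h * C ↔
      h = C ∨ ∃ α : ℂ, h = !![1 - α, -1; α ^ 2, 1 + α]) ∧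
    (∀ α : ℂ, !![1 - α, -1; α ^ 2, 1 + α] =
      (!![α, 1; -1, 0])⁻¹ * C * !![α, 1; -1, 0]) := by
  obtain ⟨B, hB, hh⟩ := hconj
  set p := B 0 0 with hp
  set q := B 0 1 with hq
  set r := B 1 0 with hr
  set s := B 1 1 with hs
  have hBe : B = !![p, q; r, s] := by
    rw [hp, hq, hr, hs]; exact Matrix.etaExpand_eq B |>.symm
  have hdet : p * s - q * r = 1 := by
    rw [Matrix.det_fin_two] at hB; exact hB
  have hBinv : B⁻¹ = !![s, -q; -r, p] := by
    apply Matrix.inv_eq_left_inv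
    rw [hBe]
    ext i j
    fin_cases i <;> fin_cases j <;>
      simp [Matrix.mul_fin_two, Matrix.one_fin_two] <;> first | ring1 | linear_combination hdet
  have hh2 : h = !![1 - p * q, -q ^ 2; p ^ 2, 1 + p * q] := by
    rw [hh, hBinv, hC, hBe]
    ext i j
    fin_cases i <;> fin_cases j <;>
      simp [Matrix.mul_fin_two] <;> first | ring1 | linear_combination hdet
  constructor
  · constructor
    · intro heq
      rw [hh2, hC] at heq
      simp only [Matrix.mul_fin_two] at heq
      have e01 := congrFun (congrFun heq 0) 1
      have e10 := congrFun (congrFun heq 1) 0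
      simp at e01 e10
      by_cases hq1 : q ^ 2 = 1
      · right
        refine ⟨p * q, ?_⟩
        rw [hh2]
        have h1 : -q ^ 2 = (-1 : ℂ) := by rw [hq1]
        have h2 : p ^ 2 = (p * q) ^ 2 := by rw [mul_pow, hq1, mul_one]
        rw [h1, h2]
      · left
        have hq0 : q = 0 := by
          have : q ^ 2 * (q ^ 2 - 1) = 0 := by linear_combination e01
          rcases mul_eq_zero.mp this with h' | h'
          · exact pow_eq_zero_iff (by norm_num) |>.mp h'
          · exact absurd (by linear_combination h') hq1
        have hp1 : p ^ 2 = 1 := by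
          have : (1 - p ^ 2) * (1 - q ^ 2) = 0 := by linear_combination -e10
          rcases mul_eq_zero.mp this with h' | h'
          · linear_combination -h'
          · exact absurd (by linear_combination -h') hq1
        rw [hh2, hC, hq0, hp1]
        norm_num
    · rintro (rfl | ⟨α, rfl⟩)
      · rfl
      · rw [hC]
        ext i j
        fin_cases i <;> fin_cases j <;> simp [Matrix.mul_fin_two] <;> ring
  · intro α
    have hAinv : (!![α, 1; -1, 0] : Matrix (Fin 2) (Fin 2) ℂ)⁻¹ = !![0, -1; 1, α] := by
      apply Matrix.inv_eq_left_inv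
      ext i j
      fin_cases i <;> fin_cases j <;> simp [Matrix.mul_fin_two, Matrix.one_fin_two]
    rw [hAinv, hC]
    ext i j
    fin_cases i <;> fin_cases j <;> simp [Matrix.mul_fin_two] <;> ring
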